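/- For a, b, c > 0, ∫₀^∞ (a·exp(-c·e^{ax})/(1 - e^{-ax}) - b·exp(-c·e^{bx})/(1 - e^{-bx})) dx = e^{-c} · ln(b/a). -/

import Mathlib

open MeasureTheory Real Set Filter Topology

namespace Frullani

noncomputable def g (c t : ℝ) : ℝ := Real.exp (-c * Real.exp t) / (1 - Real.exp (-t))

lemma denom_pos {t : ℝ} (ht : 0 < t) : 0 < 1 - Real.exp (-t) := by
  have : Real.exp (-t) < 1 := Real.exp_lt_one_iff.mpr (by linarith)
  linarith

lemma g_pos {c t : ℝ} (ht : 0 < t) : 0 < g c t :=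
  div_pos (Real.exp_pos _) (denom_pos ht)

lemma g_contOn (c : ℝ) : ContinuousOn (g c) (Ioi 0) := by
  apply ContinuousOn.div (by fun_prop) (by fun_prop)
  exact fun t ht => ne_of_gt (denom_pos ht)

lemma g_contAt (c : ℝ) {t : ℝ} (ht : 0 < t) : ContinuousAt (g c) t :=
  (g_contOn c).continuousAt (isOpen_Ioi.mem_nhds ht)

lemma g_le {c s t : ℝ} (hc : 0 < c) (hs : 0 < s) (hst : s ≤ t) :
    g c t ≤ Real.exp (-c) / (1 - Real.exp (-s)) * Real.exp (-c * t) := by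
  have ht : 0 < t := lt_of_lt_of_le hs hst
  have h1 : t + 1 ≤ Real.exp t := Real.add_one_le_exp t
  have hnum : Real.exp (-c * Real.exp t) ≤ Real.exp (-c) * Real.exp (-c * t) := by
    rw [← Real.exp_add]
    apply Real.exp_le_exp.mpr
    nlinarith
  have hden : 1 - Real.exp (-s) ≤ 1 - Real.exp (-t) := by
    have := Real.exp_le_exp.mpr (by linarith : -t ≤ -s)
    linarith
  have hd := denom_pos hs
  calc g c t ≤ Real.exp (-c) * Real.exp (-c * t) / (1 - Real.exp (-s)) :=
        div_le_div₀ (by positivity) hnum hd hden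
    _ = Real.exp (-c) / (1 - Real.exp (-s)) * Real.exp (-c * t) := by ring

end Frullani

namespace Frullani

lemma phi_bound {c t : ℝ} (hc : 0 < c) (ht : 0 < t) :
    |g c t - Real.exp (-c) / t| ≤ (c + 1) * Real.exp (-c) * Real.exp t := by
  set E := Real.exp t with hE
  set u := Real.exp (-t) with hu
  have huE : u * E = 1 := by rw [hu, hE, ← Real.exp_add]; simp
  have hE1 : 1 + t ≤ E := by have := Real.add_one_le_exp t; linarith
  have hu0 : 0 < u := Real.exp_pos _
  have hEgt : 1 < E := by nlinarith
  have hd : 0 < 1 - u := by nlinarith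
  have hul : 1 - t ≤ u := by have := Real.add_one_le_exp (-t); linarith
  have huu : u * (1 + t) ≤ 1 := by nlinarith
  have hgd : g c t = Real.exp (-c * E) / (1 - u) := rfl
  have hc0 : 0 < Real.exp (-c) := Real.exp_pos _
  have hnum : Real.exp (-c) - Real.exp (-c * E) ≤ c * (E - 1) * Real.exp (-c) := by
    have h2 : 1 - Real.exp (-(c * (E - 1))) ≤ c * (E - 1) := by
      have := Real.add_one_le_exp (-(c * (E - 1))); linarith
    have h3 : Real.exp (-c * E) = Real.exp (-c) * Real.exp (-(c * (E - 1))) := by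
      rw [← Real.exp_add]; ring_nf
    nlinarith [Real.exp_pos (-(c * (E - 1)))]
  have hnum0 : Real.exp (-c * E) ≤ Real.exp (-c) := Real.exp_le_exp.mpr (by nlinarith)
  have hdu : 1 - u = u * (E - 1) := by nlinarith
  have hE1u : E * (1 - u) = E - 1 := by rw [hdu]; linear_combination (E - 1) * huE
  have habs1 : |Real.exp (-c * E) / (1 - u) - Real.exp (-c) / (1 - u)| ≤ c * Real.exp (-c) * E := by
    rw [abs_sub_comm, ← sub_div, abs_of_nonneg (div_nonneg (by linarith) hd.le),
      div_le_iff₀ hd, mul_assoc, hE1u]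
    linarith
  have key2 : t - (1 - u) ≤ t * t := by nlinarith [huu, hul]
  have hEt : t * t ≤ E * (1 - u) * t := by rw [hE1u]; nlinarith
  have h2u : Real.exp (-c) / (1 - u) - Real.exp (-c) / t ≤ Real.exp (-c) * E := by
    rw [div_sub_div _ _ (ne_of_gt hd) (ne_of_gt ht), div_le_iff₀ (by positivity)]
    nlinarith [key2, hEt, hc0]
  have h2l : 0 ≤ Real.exp (-c) / (1 - u) - Real.exp (-c) / t := by
    have h1u : 1 - u ≤ t := by linarith
    have : Real.exp (-c) / t ≤ Real.exp (-c) / (1 - u) := by gcongr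
    linarith
  have hsplit : g c t - Real.exp (-c) / t =
      (Real.exp (-c * E) / (1 - u) - Real.exp (-c) / (1 - u))
        + (Real.exp (-c) / (1 - u) - Real.exp (-c) / t) := by rw [hgd]; ring
  rw [hsplit]
  calc |_| ≤ |Real.exp (-c * E) / (1 - u) - Real.exp (-c) / (1 - u)|
      + |Real.exp (-c) / (1 - u) - Real.exp (-c) / t| := abs_add_le _ _
    _ ≤ c * Real.exp (-c) * E + Real.exp (-c) * E := by
        rw [abs_of_nonneg h2l]; exact add_le_add habs1 h2u
    _ = (c + 1) * Real.exp (-c) * E := by ring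

end Frullani

namespace Frullani

lemma g_intervalIntegrable (c : ℝ) {u v : ℝ} (hu : 0 < u) (hv : 0 < v) :
    IntervalIntegrable (g c) volume u v := by
  apply ContinuousOn.intervalIntegrable
  apply (g_contOn c).mono
  intro x hx
  have h1 := hx.1
  simp only [lt_inf_iff, mem_Ioi] at *
  exact lt_of_lt_of_le (lt_min hu hv) (by simpa using hx.1)

noncomputable def G (c y : ℝ) : ℝ := ∫ t in (1:ℝ)..y, g c t

lemma G_hasDerivAt (c : ℝ) {y : ℝ} (hy : 0 < y) : HasDerivAt (G c) (g c y) y := by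
  apply intervalIntegral.integral_hasDerivAt_right (g_intervalIntegrable c one_pos hy)
  · exact ContinuousOn.stronglyMeasurableAtFilter isOpen_Ioi (g_contOn c) y hy
  · exact g_contAt c hy

end Frullani

namespace Frullani

lemma one_div_intervalIntegrable {u v : ℝ} (hu : 0 < u) (hv : 0 < v) (e : ℝ) :
    IntervalIntegrable (fun t => e / t) volume u v := by
  apply ContinuousOn.intervalIntegrable
  apply ContinuousOn.div continuousOn_const continuousOn_id
  intro x hx
  have : 0 < x := lt_of_lt_of_le (lt_min hu hv) (by simpa using hx.1)
  exact ne_of_gt this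

lemma tendsto_zero {a b c : ℝ} (ha : 0 < a) (hb : 0 < b) (hc : 0 < c) (hab : a ≤ b) :
    Tendsto (fun x => ∫ t in (a*x)..(b*x), g c t) (𝓝[>] (0:ℝ))
      (𝓝 (Real.exp (-c) * Real.log (b/a))) := by
  set L := Real.exp (-c) * Real.log (b/a) with hL
  set K := (c+1) * Real.exp (-c) * Real.exp b * (b - a) with hK
  have key : ∀ x ∈ Ioo (0:ℝ) 1, ‖(∫ t in (a*x)..(b*x), g c t) - L‖ ≤ K * x := by
    intro x hx
    obtain ⟨hx0, hx1⟩ := hx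
    have hax : 0 < a * x := mul_pos ha hx0
    have hbx : 0 < b * x := mul_pos hb hx0
    have hIg := g_intervalIntegrable c hax hbx
    have hIh := one_div_intervalIntegrable hax hbx (Real.exp (-c))
    have hone : (∫ t in (a*x)..(b*x), Real.exp (-c) / t) = L := by
      have h0 : (0:ℝ) ∉ uIcc (a*x) (b*x) := by
        intro h
        have : 0 < min (a*x) (b*x) := lt_min hax hbx
        have := h.1
        simp only [uIcc, Set.mem_Icc] at h
        linarith [h.1]
      have : (∫ t in (a*x)..(b*x), Real.exp (-c) / t)
          = Real.exp (-c) * ∫ t in (a*x)..(b*x), 1 / t := by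
        rw [← intervalIntegral.integral_const_mul]
        congr 1; ext t; ring
      rw [this, integral_one_div_of_pos hax hbx, hL]
      congr 2
      rw [mul_div_mul_right _ _ (ne_of_gt hx0)]
    have hsub : (∫ t in (a*x)..(b*x), g c t) - L
        = ∫ t in (a*x)..(b*x), (g c t - Real.exp (-c) / t) := by
      rw [intervalIntegral.integral_sub hIg hIh, hone]
    rw [hsub]
    have hbound : ∀ t ∈ Set.uIoc (a*x) (b*x), ‖g c t - Real.exp (-c) / t‖ ≤
        (c+1) * Real.exp (-c) * Real.exp b := by
      intro t ht
      have ht1 : 0 < t := lt_trans (lt_min hax hbx) ht.1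
      have ht2 : t ≤ b := by
        have := ht.2
        have hmax : max (a*x) (b*x) ≤ b := by
          apply max_le <;> nlinarith
        linarith [le_trans this hmax]
      calc ‖g c t - Real.exp (-c) / t‖ ≤ (c+1) * Real.exp (-c) * Real.exp t :=
            phi_bound hc ht1
        _ ≤ (c+1) * Real.exp (-c) * Real.exp b :=
            mul_le_mul_of_nonneg_left (Real.exp_le_exp.mpr ht2) (by positivity)
    calc ‖∫ t in (a*x)..(b*x), (g c t - Real.exp (-c) / t)‖
        ≤ (c+1) * Real.exp (-c) * Real.exp b * |b*x - a*x| :=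
          intervalIntegral.norm_integral_le_of_norm_le_const hbound
      _ = K * x := by
          rw [hK, abs_of_nonneg (by nlinarith)]; ring
  have hKx : Tendsto (fun x : ℝ => K * x) (𝓝[>] (0:ℝ)) (𝓝 0) := by
    have : Tendsto (fun x : ℝ => K * x) (𝓝 (0:ℝ)) (𝓝 (K * 0)) :=
      (continuous_const.mul continuous_id).tendsto 0
    simpa using this.mono_left nhdsWithin_le_nhds
  have h0 : Tendsto (fun x => (∫ t in (a*x)..(b*x), g c t) - L) (𝓝[>] (0:ℝ)) (𝓝 0) := by
    apply squeeze_zero_norm' _ hKx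
    filter_upwards [Ioo_mem_nhdsGT_of_mem (by constructor <;> norm_num : (0:ℝ) ∈ Ico (0:ℝ) 1)]
      with x hx using key x hx
  have := h0.add (tendsto_const_nhds (x := L))
  simpa using this

end Frullani

namespace Frullani

lemma tendsto_top {a b c : ℝ} (ha : 0 < a) (hb : 0 < b) (hc : 0 < c) (hab : a ≤ b) :
    Tendsto (fun x => ∫ t in (a*x)..(b*x), g c t) atTop (𝓝 0) := by
  set K := (b - a) * (Real.exp (-c) / (1 - Real.exp (-a))) / (c * a) with hKdef
  have hB : Tendsto (fun x : ℝ => K * ((c*a*x) * Real.exp (-(c*a*x)))) atTop (𝓝 0) := by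
    have h1 : Tendsto (fun y : ℝ => y^1 * Real.exp (-y)) atTop (𝓝 0) :=
      tendsto_pow_mul_exp_neg_atTop_nhds_zero 1
    have h2 : Tendsto (fun x : ℝ => c*a*x) atTop atTop :=
      Tendsto.const_mul_atTop (by positivity) tendsto_id
    have h3 := (h1.comp h2).const_mul K
    simpa [pow_one, Function.comp, mul_comm] using h3
  apply squeeze_zero_norm' _ hB
  filter_upwards [eventually_ge_atTop (1:ℝ)] with x hx
  have hx0 : 0 < x := lt_of_lt_of_le one_pos hx
  have hax : 0 < a * x := mul_pos ha hx0
  have hmin : min (a*x) (b*x) = a*x := min_eq_left (by nlinarith)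
  have hbound : ∀ t ∈ Set.uIoc (a*x) (b*x), ‖g c t‖ ≤
      Real.exp (-c) / (1 - Real.exp (-a)) * Real.exp (-c * (a*x)) := by
    intro t ht
    have hta : a * x ≤ t := by
      have := ht.1; rw [hmin] at this; linarith
    have hat : a ≤ t := by nlinarith
    have ht0 : 0 < t := lt_of_lt_of_le ha hat
    rw [Real.norm_eq_abs, abs_of_pos (g_pos ht0)]
    calc g c t ≤ Real.exp (-c) / (1 - Real.exp (-a)) * Real.exp (-c * t) :=
          g_le hc ha hat
      _ ≤ Real.exp (-c) / (1 - Real.exp (-a)) * Real.exp (-c * (a*x)) := by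
          exact mul_le_mul_of_nonneg_left (Real.exp_le_exp.mpr (by nlinarith))
            (div_nonneg (Real.exp_pos _).le (denom_pos ha).le)
  calc ‖∫ t in (a*x)..(b*x), g c t‖
      ≤ Real.exp (-c) / (1 - Real.exp (-a)) * Real.exp (-c * (a*x)) * |b*x - a*x| :=
        intervalIntegral.norm_integral_le_of_norm_le_const hbound
    _ = K * ((c*a*x) * Real.exp (-(c*a*x))) := by
        rw [abs_of_nonneg (by nlinarith)]
        have he : Real.exp (-(c*a*x)) = Real.exp (-c * (a*x)) := by ring_nf
        rw [he, hKdef]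
        have hd := denom_pos ha
        field_simp
  
end Frullani

namespace Frullani

lemma g_measurable (c : ℝ) : Measurable (g c) := by
  unfold g; fun_prop

lemma f'_integrable {a b c : ℝ} (ha : 0 < a) (hb : 0 < b) (hc : 0 < c) (hab : a ≤ b) :
    IntegrableOn (fun x => a * g c (a*x) - b * g c (b*x)) (Ioi 0) := by
  have hmeas : Measurable (fun x => a * g c (a*x) - b * g c (b*x)) := by
    apply Measurable.sub <;> exact (measurable_const.mul ((g_measurable c).comp (by fun_prop)))
  rw [← Ioc_union_Ioi_eq_Ioi (le_of_lt one_pos : (0:ℝ) ≤ 1)]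
  apply IntegrableOn.union
  · -- bounded on Ioc 0 1
    apply Measure.integrableOn_of_bounded (M := (a+b) * ((c+1) * Real.exp (-c) * Real.exp b))
      measure_Ioc_lt_top.ne hmeas.aestronglyMeasurable
    rw [ae_restrict_iff' measurableSet_Ioc]
    filter_upwards with x hx
    obtain ⟨hx0, hx1⟩ := hx
    have hax : 0 < a * x := mul_pos ha hx0
    have hbx : 0 < b * x := mul_pos hb hx0
    have hsplit : a * g c (a*x) - b * g c (b*x)
        = a * (g c (a*x) - Real.exp (-c) / (a*x)) - b * (g c (b*x) - Real.exp (-c) / (b*x)) := by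
      field_simp
      ring
    rw [Real.norm_eq_abs, hsplit]
    have h1 := phi_bound hc hax
    have h2 := phi_bound hc hbx
    have e1 : Real.exp (a*x) ≤ Real.exp b := Real.exp_le_exp.mpr (by nlinarith)
    have e2 : Real.exp (b*x) ≤ Real.exp b := Real.exp_le_exp.mpr (by nlinarith)
    have hcp : (0:ℝ) ≤ (c+1) * Real.exp (-c) := by positivity
    have t1 : a * |g c (a*x) - Real.exp (-c) / (a*x)| ≤ a * ((c+1) * Real.exp (-c) * Real.exp b) :=
      mul_le_mul_of_nonneg_left (h1.trans (mul_le_mul_of_nonneg_left e1 hcp)) ha.le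
    have t2 : b * |g c (b*x) - Real.exp (-c) / (b*x)| ≤ b * ((c+1) * Real.exp (-c) * Real.exp b) :=
      mul_le_mul_of_nonneg_left (h2.trans (mul_le_mul_of_nonneg_left e2 hcp)) hb.le
    calc |a * (g c (a*x) - Real.exp (-c) / (a*x)) - b * (g c (b*x) - Real.exp (-c) / (b*x))|
        ≤ |a * (g c (a*x) - Real.exp (-c) / (a*x))| + |b * (g c (b*x) - Real.exp (-c) / (b*x))| :=
          abs_sub _ _
      _ = a * |g c (a*x) - Real.exp (-c) / (a*x)| + b * |g c (b*x) - Real.exp (-c) / (b*x)| := by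
          rw [abs_mul, abs_mul, abs_of_pos ha, abs_of_pos hb]
      _ ≤ (a+b) * ((c+1) * Real.exp (-c) * Real.exp b) := by linarith
  · -- exponential decay on Ioi 1
    have hterm : ∀ d : ℝ, 0 < d → IntegrableOn (fun x => d * g c (d*x)) (Ioi 1) := by
      intro d hd
      apply Integrable.mono'
        ((exp_neg_integrableOn_Ioi 1 (mul_pos hc hd)).const_mul
          (d * (Real.exp (-c) / (1 - Real.exp (-d)))))
      · exact (measurable_const.mul ((g_measurable c).comp (by fun_prop))).aestronglyMeasurable
      · rw [ae_restrict_iff' measurableSet_Ioi]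
        filter_upwards with x hx
        have hx1 : (1:ℝ) < x := hx
        have hdx : 0 < d * x := by nlinarith
        have hdd : d ≤ d * x := by nlinarith
        rw [Real.norm_eq_abs, abs_of_pos (mul_pos hd (g_pos hdx))]
        have := g_le hc hd hdd
        have he : Real.exp (-c * (d*x)) = Real.exp (-(c*d) * x) := by ring_nf
        rw [he] at this
        calc d * g c (d*x) ≤ d * (Real.exp (-c) / (1 - Real.exp (-d)) * Real.exp (-(c*d) * x)) := by
              exact mul_le_mul_of_nonneg_left this hd.le
          _ = d * (Real.exp (-c) / (1 - Real.exp (-d))) * Real.exp (-(c*d) * x) := by ring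
    exact (hterm a ha).sub (hterm b hb)

end Frullani

namespace Frullani

lemma key {a b c : ℝ} (ha : 0 < a) (hb : 0 < b) (hc : 0 < c) (hab : a ≤ b) :
    ∫ x in Ioi (0:ℝ), (a * g c (a*x) - b * g c (b*x)) = Real.exp (-c) * Real.log (b/a) := by
  set L := Real.exp (-c) * Real.log (b/a) with hL
  set H : ℝ → ℝ := fun x => if x ≤ 0 then -L else G c (a*x) - G c (b*x) with hH
  have Hval : ∀ x : ℝ, 0 < x → G c (a*x) - G c (b*x) = -∫ t in (a*x)..(b*x), g c t := by
    intro x hx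
    have hax : 0 < a * x := mul_pos ha hx
    have hbx : 0 < b * x := mul_pos hb hx
    rw [show (G c (a*x) - G c (b*x)) = ∫ t in (b*x)..(a*x), g c t from
      intervalIntegral.integral_interval_sub_left (g_intervalIntegrable c one_pos hax)
        (g_intervalIntegrable c one_pos hbx),
      intervalIntegral.integral_symm]
  have hcont : ContinuousWithinAt H (Ici 0) 0 := by
    rw [← continuousWithinAt_Ioi_iff_Ici]
    have hH0 : H 0 = -L := by simp [hH]
    unfold ContinuousWithinAt
    rw [hH0]
    apply Tendsto.congr' _ ((tendsto_zero ha hb hc hab).neg)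
    filter_upwards [self_mem_nhdsWithin] with x (hx : 0 < x)
    simp only [hH, not_le.mpr hx, if_false]
    exact (Hval x hx).symm
  have hderiv : ∀ x ∈ Ioi (0:ℝ), HasDerivAt H (a * g c (a*x) - b * g c (b*x)) x := by
    intro x hx
    have hx0 : 0 < x := hx
    have hinner : ∀ d : ℝ, 0 < d → HasDerivAt (fun y => G c (d*y)) (d * g c (d*x)) x := by
      intro d hd
      have h1 : HasDerivAt (fun y : ℝ => d * y) d x := by
        simpa using (hasDerivAt_id x).const_mul d
      have h2 := (G_hasDerivAt c (mul_pos hd hx0)).comp x h1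
      simpa [mul_comm, Function.comp_def] using h2
    have h3 := (hinner a ha).sub (hinner b hb)
    apply h3.congr_of_eventuallyEq
    filter_upwards [isOpen_Ioi.mem_nhds hx] with y (hy : 0 < y)
    simp only [hH, not_le.mpr hy, if_false]
    rfl
  have htop : Tendsto H atTop (𝓝 0) := by
    have h := (tendsto_top ha hb hc hab).neg
    rw [neg_zero] at h
    apply Tendsto.congr' _ h
    filter_upwards [eventually_gt_atTop (0:ℝ)] with x hx
    simp only [hH, not_le.mpr hx, if_false]
    exact (Hval x hx).symm
  have hint := f'_integrable ha hb hc hab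
  have := integral_Ioi_of_hasDerivAt_of_tendsto hcont hderiv hint htop
  rw [this]
  simp [hH, hL]

end Frullani

theorem frullani_exp_exp (a b c : ℝ) (ha : 0 < a) (hb : 0 < b) (hc : 0 < c) :
    ∫ x in Ioi (0:ℝ),
      (a * Real.exp (-c * Real.exp (a * x)) / (1 - Real.exp (-a * x))
        - b * Real.exp (-c * Real.exp (b * x)) / (1 - Real.exp (-b * x)))
      = Real.exp (-c) * Real.log (b / a) := by
  have hrw : ∀ x : ℝ,
      (a * Real.exp (-c * Real.exp (a * x)) / (1 - Real.exp (-a * x))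
        - b * Real.exp (-c * Real.exp (b * x)) / (1 - Real.exp (-b * x)))
      = a * Frullani.g c (a*x) - b * Frullani.g c (b*x) := by
    intro x
    simp only [Frullani.g, neg_mul, mul_div_assoc]
  simp only [hrw]
  rcases le_total a b with hab | hab
  · exact Frullani.key ha hb hc hab
  · have h := Frullani.key hb ha hc hab
    have heq : ∫ x in Ioi (0:ℝ), (a * Frullani.g c (a*x) - b * Frullani.g c (b*x))
        = -∫ x in Ioi (0:ℝ), (b * Frullani.g c (b*x) - a * Frullani.g c (a*x)) := by
      rw [← integral_neg]; congr 1; ext x; ring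
    rw [heq, h]
    rw [show Real.log (a/b) = -Real.log (b/a) by rw [← Real.log_inv, inv_div]]
    ring
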